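/- arXiv:2301.01708 — 3 statements merged into one kernel-verified Lean document; each statement's English description precedes it below -/
import Mathlib

section
/- Let n ≥ 4 and let a, b be integers with b ≥ a ≥ 0 and a + b = n − 4. Then the eccentricity matrix of the complement of the tree T_{n,3}^{a,b} has exactly the following eigenvalues: ±sqrt((4n+1 + sqrt((4n+1)^2 − 64(a+1)(b+1)))/2) and ±sqrt((4n+1 − sqrt((4n+1)^2 − 64(a+1)(b+1)))/2), each with multiplicity 1, and 0 with multiplicity n − 4. -/
noncomputable section

open SimpleGraph

/-- The eccentricity of a vertex: the maximum distance to the other vertices. -/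
def ecc {n : ℕ} (G : SimpleGraph (Fin n)) (v : Fin n) : ℕ :=
  Finset.univ.sup fun u => G.dist v u

/-- The eccentricity matrix of a graph on `Fin n`: the `(u,v)` entry is
`d(u,v)` if `u ≠ v` and `d(u,v) = min (ecc u) (ecc v)`, and `0` otherwise. -/
def eccMatrix {n : ℕ} (G : SimpleGraph (Fin n)) : Matrix (Fin n) (Fin n) ℝ :=
  fun u v =>
    if u ≠ v ∧ G.dist u v = min (ecc G u) (ecc G v) then (G.dist u v : ℝ) else 0

/-- The multiset of eigenvalues of the eccentricity matrix (the roots of its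
characteristic polynomial, with multiplicity). -/
def eccEigs {n : ℕ} (G : SimpleGraph (Fin n)) : Multiset ℝ :=
  ((eccMatrix G).charpoly).roots

/-- The eigenvalues of the eccentricity matrix, listed in non-increasing order. -/
def eccEigList {n : ℕ} (G : SimpleGraph (Fin n)) : List ℝ :=
  ((eccEigs G).sort (· ≤ ·)).reverse

/-- `xi G k` is the `k`-th largest eigenvalue of the eccentricity matrix of `G`
(1-indexed, so `xi G 1` is the `𝓔`-spectral radius and `xi G n` is the least
`𝓔`-eigenvalue). -/
def xi {n : ℕ} (G : SimpleGraph (Fin n)) (k : ℕ) : ℝ :=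
  (eccEigList G).getD (k - 1) 0

/-- The eccentricity energy of `G`: the sum of the absolute values of the
eigenvalues of the eccentricity matrix. -/
def eccEnergy {n : ℕ} (G : SimpleGraph (Fin n)) : ℝ :=
  ((eccEigs G).map fun x => |x|).sum

/-- The star `K_{1,n-1}` on `Fin n`, centered at `0`. -/
def starGraph (n : ℕ) : SimpleGraph (Fin n) :=
  SimpleGraph.fromRel fun u _ => u.val = 0

/-- The diameter of a graph on `Fin n`. -/
def gdiam {n : ℕ} (G : SimpleGraph (Fin n)) : ℕ :=
  Finset.univ.sup fun p : Fin n × Fin n => G.dist p.1 p.2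

/-- The tree `T_{n,d}^{a,b}` (with `b = n - d - 1 - a`): a path `v₀v₁⋯v_d` with
`a` pendant vertices attached to `v₁` and the remaining `n - d - 1 - a` pendant
vertices attached to `v_{d-1}`.  Vertices `0,…,d` form the path, vertices
`d+1,…,d+a` are the pendants at `v₁`, and vertices `d+a+1,…,n-1` are the
pendants at `v_{d-1}`. -/
def Tnd (n d a : ℕ) : SimpleGraph (Fin n) :=
  SimpleGraph.fromRel fun u v =>
    (u.val + 1 = v.val ∧ v.val ≤ d) ∨
    (u.val = 1 ∧ d < v.val ∧ v.val ≤ d + a) ∨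
    (u.val = d - 1 ∧ d + a < v.val)

def l1 (a v : ℕ) : Prop := v = 0 ∨ (3 < v ∧ v ≤ 3 + a)
def l2 (a v : ℕ) : Prop := v = 3 ∨ 3 + a < v

instance (a v : ℕ) : Decidable (l1 a v) := by unfold l1; infer_instance
instance (a v : ℕ) : Decidable (l2 a v) := by unfold l2; infer_instance

/-- edges of the tree, in terms of values -/
def eg (a u v : ℕ) : Prop :=
  (u = 1 ∧ l1 a v) ∨ (l1 a u ∧ v = 1) ∨ (u = 2 ∧ l2 a v) ∨ (l2 a u ∧ v = 2) ∨
  (u = 1 ∧ v = 2) ∨ (u = 2 ∧ v = 1)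

instance (a u v : ℕ) : Decidable (eg a u v) := by unfold eg; infer_instance

lemma tnd_adjT {n a : ℕ} (u v : Fin n) :
    (Tnd n 3 a).Adj u v ↔ u.val ≠ v.val ∧ eg a u.val v.val := by
  have hu := u.isLt; have hv := v.isLt
  simp only [Tnd, SimpleGraph.fromRel_adj, ne_eq, Fin.ext_iff, eg, l1, l2]
  omega

lemma tnd_adjG {n a : ℕ} (u v : Fin n) :
    (Tnd n 3 a)ᶜ.Adj u v ↔ u.val ≠ v.val ∧ ¬ eg a u.val v.val := by
  rw [SimpleGraph.compl_adj, tnd_adjT]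
  constructor
  · rintro ⟨h1, h2⟩
    exact ⟨fun h => h1 (Fin.ext h), fun h => h2 ⟨fun hh => h1 (Fin.ext hh), h⟩⟩
  · rintro ⟨h1, h2⟩
    exact ⟨fun h => h1 (by rw [h]), fun hh => h2 hh.2⟩

lemma tnd_exists_mid {V : Type*} {G : SimpleGraph V} {x y : V} (hr : G.Reachable x y)
    (h : G.dist x y = 2) : ∃ m, G.Adj x m ∧ G.Adj m y := by
  obtain ⟨p, hp⟩ := hr.exists_walk_length_eq_dist
  rw [h] at hp
  cases p with
  | nil => simp at hp
  | cons hadj p' =>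
    cases p' with
    | nil => simp at hp
    | cons hadj' p'' =>
      simp only [SimpleGraph.Walk.length_cons] at hp
      have h2 := SimpleGraph.Walk.eq_of_length_eq_zero (by omega : p''.length = 0)
      subst h2
      exact ⟨_, hadj, hadj'⟩

lemma tnd_dist_eq {n a : ℕ} (hn : 4 ≤ n) (u v : Fin n) :
    (Tnd n 3 a)ᶜ.dist u v =
      if u.val = v.val then 0
      else if (u.val = 1 ∧ v.val = 2) ∨ (u.val = 2 ∧ v.val = 1) then 3
      else if eg a u.val v.val then 2
      else 1 := by
  set G := (Tnd n 3 a)ᶜ with hG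
  have hu := u.isLt; have hv := v.isLt
  have h0 : (0:ℕ) < n := by omega
  have h3 : (3:ℕ) < n := by omega
  by_cases huv : u.val = v.val
  · have : u = v := Fin.ext huv
    simp [this, huv]
  rw [if_neg huv]
  by_cases h12 : (u.val = 1 ∧ v.val = 2) ∨ (u.val = 2 ∧ v.val = 1)
  · rw [if_pos h12]
    have key : ∀ x y : Fin n, x.val = 1 → y.val = 2 → G.dist x y = 3 := by
      intro x y hx hy
      have hxy : x ≠ y := by intro h; rw [h] at hx; omega
      have a1 : G.Adj x ⟨3, h3⟩ := by rw [tnd_adjG]; simp only [eg, l1, l2, hx]; omega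
      have a2 : G.Adj (⟨3, h3⟩ : Fin n) ⟨0, h0⟩ := by
        rw [tnd_adjG]; simp only [eg, l1, l2]; omega
      have a3 : G.Adj (⟨0, h0⟩ : Fin n) y := by rw [tnd_adjG]; simp only [eg, l1, l2, hy]; omega
      have hle := SimpleGraph.dist_le (.cons a1 (.cons a2 (.cons a3 .nil)) : G.Walk x y)
      simp only [SimpleGraph.Walk.length_cons, SimpleGraph.Walk.length_nil] at hle
      have hreach : G.Reachable x y := ⟨.cons a1 (.cons a2 (.cons a3 .nil))⟩
      have hne0 : G.dist x y ≠ 0 := fun h => hxy (hreach.dist_eq_zero_iff.mp h)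
      have hne1 : G.dist x y ≠ 1 := by
        intro h
        have := (SimpleGraph.dist_eq_one_iff_adj).mp h
        rw [tnd_adjG] at this
        simp [hx, hy, eg] at this
      have hne2 : G.dist x y ≠ 2 := by
        intro h
        obtain ⟨m, hm1, hm2⟩ := tnd_exists_mid hreach h
        have hmlt := m.isLt
        rw [tnd_adjG] at hm1 hm2
        obtain ⟨hne, hA⟩ := hm1
        obtain ⟨hne', hA'⟩ := hm2
        simp only [eg, l1, l2] at hA hA'
        omega
      omega
    rcases h12 with ⟨hx, hy⟩ | ⟨hx, hy⟩
    · exact key u v hx hy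
    · rw [SimpleGraph.dist_comm]; exact key v u hy hx
  rw [if_neg h12]
  by_cases hE : eg a u.val v.val
  · rw [if_pos hE]
    have key : ∀ x y w : Fin n, x ≠ y → eg a x.val y.val → G.Adj x w → G.Adj w y →
        G.dist x y = 2 := by
      intro x y w hxy hee a1 a2
      have hle := SimpleGraph.dist_le (.cons a1 (.cons a2 .nil) : G.Walk x y)
      simp only [SimpleGraph.Walk.length_cons, SimpleGraph.Walk.length_nil] at hle
      have hreach : G.Reachable x y := ⟨.cons a1 (.cons a2 .nil)⟩
      have hne0 : G.dist x y ≠ 0 := fun h => hxy (hreach.dist_eq_zero_iff.mp h)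
      have hne1 : G.dist x y ≠ 1 := by
        intro h
        have := (SimpleGraph.dist_eq_one_iff_adj).mp h
        rw [tnd_adjG] at this
        exact this.2 hee
      omega
    have hxy : u ≠ v := fun h => huv (by rw [h])
    have e12 : ¬ ((u.val = 1 ∧ v.val = 2) ∨ (u.val = 2 ∧ v.val = 1)) := h12
    rcases hE with ⟨hx, hy⟩ | ⟨hx, hy⟩ | ⟨hx, hy⟩ | ⟨hx, hy⟩ | ⟨hx, hy⟩ | ⟨hx, hy⟩
    · refine key u v ⟨3, h3⟩ hxy (Or.inl ⟨hx, hy⟩) ?_ ?_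
      · rw [tnd_adjG]; simp only [eg, l1, l2, hx]; omega
      · rw [tnd_adjG]; simp only [eg, l1, l2] at hy ⊢; omega
    · refine key u v ⟨3, h3⟩ hxy (Or.inr (Or.inl ⟨hx, hy⟩)) ?_ ?_
      · rw [tnd_adjG]; simp only [eg, l1, l2] at hx ⊢; omega
      · rw [tnd_adjG]; simp only [eg, l1, l2, hy]; omega
    · refine key u v ⟨0, h0⟩ hxy (Or.inr (Or.inr (Or.inl ⟨hx, hy⟩))) ?_ ?_
      · rw [tnd_adjG]; simp only [eg, l1, l2, hx]; omega
      · rw [tnd_adjG]; simp only [eg, l1, l2] at hy ⊢; omega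
    · refine key u v ⟨0, h0⟩ hxy (Or.inr (Or.inr (Or.inr (Or.inl ⟨hx, hy⟩)))) ?_ ?_
      · rw [tnd_adjG]; simp only [eg, l1, l2] at hx ⊢; omega
      · rw [tnd_adjG]; simp only [eg, l1, l2, hy]; omega
    · exact absurd (Or.inl ⟨hx, hy⟩) h12
    · exact absurd (Or.inr ⟨hx, hy⟩) h12
  · rw [if_neg hE]
    rw [SimpleGraph.dist_eq_one_iff_adj, tnd_adjG]
    exact ⟨huv, hE⟩

lemma tnd_ecc_eq {n a : ℕ} (hn : 4 ≤ n) (v : Fin n) :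
    ecc ((Tnd n 3 a)ᶜ) v = if v.val = 1 ∨ v.val = 2 then 3 else 2 := by
  have hv := v.isLt
  have h1 : (1:ℕ) < n := by omega
  have h2 : (2:ℕ) < n := by omega
  unfold ecc
  apply le_antisymm
  · apply Finset.sup_le
    intro u _
    rw [tnd_dist_eq hn]
    split_ifs <;> omega
  · by_cases hv1 : v.val = 1
    · have := (Finset.le_sup (f := fun u => (Tnd n 3 a)ᶜ.dist v u)
        (Finset.mem_univ (⟨2, h2⟩ : Fin n)) : (Tnd n 3 a)ᶜ.dist v ⟨2, h2⟩ ≤ _)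
      rw [tnd_dist_eq hn] at this
      simp only [hv1] at this ⊢
      simpa using this
    by_cases hv2 : v.val = 2
    · have := (Finset.le_sup (f := fun u => (Tnd n 3 a)ᶜ.dist v u)
        (Finset.mem_univ (⟨1, h1⟩ : Fin n)) : (Tnd n 3 a)ᶜ.dist v ⟨1, h1⟩ ≤ _)
      rw [tnd_dist_eq hn] at this
      simp only [hv2] at this ⊢
      simpa using this
    · rw [if_neg (by omega)]
      by_cases hl : l1 a v.val
      · have := (Finset.le_sup (f := fun u => (Tnd n 3 a)ᶜ.dist v u)
          (Finset.mem_univ (⟨1, h1⟩ : Fin n)) : (Tnd n 3 a)ᶜ.dist v ⟨1, h1⟩ ≤ _)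
        rw [tnd_dist_eq hn] at this
        have hv0 : ¬ (v.val = 1 ∧ (1:ℕ) = 2 ∨ v.val = 2 ∧ (1:ℕ) = 1) := by omega
        have hvne : v.val ≠ 1 := hv1
        have hegg : eg a v.val 1 := Or.inr (Or.inl ⟨hl, rfl⟩)
        rw [if_neg (by simpa using hvne), if_neg (by simpa using hv0), if_pos (by simpa using hegg)] at this
        exact this
      · have hl2 : l2 a v.val := by
          simp only [l1, l2] at hl ⊢; omega
        have := (Finset.le_sup (f := fun u => (Tnd n 3 a)ᶜ.dist v u)
          (Finset.mem_univ (⟨2, h2⟩ : Fin n)) : (Tnd n 3 a)ᶜ.dist v ⟨2, h2⟩ ≤ _)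
        rw [tnd_dist_eq hn] at this
        have hv0 : ¬ (v.val = 1 ∧ (2:ℕ) = 2 ∨ v.val = 2 ∧ (2:ℕ) = 1) := by omega
        have hegg : eg a v.val 2 := Or.inr (Or.inr (Or.inr (Or.inl ⟨hl2, rfl⟩)))
        rw [if_neg (by simpa using hv2), if_neg (by simpa using hv0), if_pos (by simpa using hegg)] at this
        exact this

def Vm (n a : ℕ) : Matrix (Fin n) (Fin 4) ℝ := fun u j =>
  if j = 0 then (if u.val = 1 then 1 else 0)
  else if j = 1 then (if u.val = 2 then 1 else 0)
  else if j = 2 then (if l1 a u.val then 1 else 0)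
  else (if l2 a u.val then 1 else 0)

def Wm (n a : ℕ) : Matrix (Fin 4) (Fin n) ℝ := fun i v =>
  if i = 0 then (if l1 a v.val then 2 else 0) + (if v.val = 2 then 3 else 0)
  else if i = 1 then (if l2 a v.val then 2 else 0) + (if v.val = 1 then 3 else 0)
  else if i = 2 then (if v.val = 1 then 2 else 0)
  else (if v.val = 2 then 2 else 0)

lemma tnd_eccM_eq {n a : ℕ} (hn : 4 ≤ n) : eccMatrix ((Tnd n 3 a)ᶜ) = Vm n a * Wm n a := by
  ext u v
  have hu := u.isLt; have hv := v.isLt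
  rw [Matrix.mul_apply, Fin.sum_univ_four]
  rw [eccMatrix]
  simp only [tnd_dist_eq hn, tnd_ecc_eq hn, ne_eq, Fin.ext_iff, eg]
  have hU : (u.val = 1 ∧ u.val ≠ 2 ∧ ¬ l1 a u.val ∧ ¬ l2 a u.val) ∨
      (u.val ≠ 1 ∧ u.val = 2 ∧ ¬ l1 a u.val ∧ ¬ l2 a u.val) ∨
      (u.val ≠ 1 ∧ u.val ≠ 2 ∧ l1 a u.val ∧ ¬ l2 a u.val) ∨
      (u.val ≠ 1 ∧ u.val ≠ 2 ∧ ¬ l1 a u.val ∧ l2 a u.val) := by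
    simp only [l1, l2]; omega
  have hV : (v.val = 1 ∧ v.val ≠ 2 ∧ ¬ l1 a v.val ∧ ¬ l2 a v.val) ∨
      (v.val ≠ 1 ∧ v.val = 2 ∧ ¬ l1 a v.val ∧ ¬ l2 a v.val) ∨
      (v.val ≠ 1 ∧ v.val ≠ 2 ∧ l1 a v.val ∧ ¬ l2 a v.val) ∨
      (v.val ≠ 1 ∧ v.val ≠ 2 ∧ ¬ l1 a v.val ∧ l2 a v.val) := by
    simp only [l1, l2]; omega
  have e1 : ¬ l1 a 1 := by simp [l1]
  have e2 : ¬ l1 a 2 := by simp [l1]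
  have e3 : ¬ l2 a 1 := by simp only [l2]; omega
  have e4 : ¬ l2 a 2 := by simp only [l2]; omega
  rcases hU with ⟨h1, h2, h3, h4⟩ | ⟨h1, h2, h3, h4⟩ | ⟨h1, h2, h3, h4⟩ | ⟨h1, h2, h3, h4⟩ <;>
    rcases hV with ⟨g1, g2, g3, g4⟩ | ⟨g1, g2, g3, g4⟩ | ⟨g1, g2, g3, g4⟩ | ⟨g1, g2, g3, g4⟩ <;>
    by_cases huv : u.val = v.val <;>
    simp [Vm, Wm, huv, h1, h2, h3, h4, g1, g2, g3, g4, e1, e2, e3, e4]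
  all_goals try split_ifs
  all_goals try omega
  all_goals norm_num

lemma tnd_card_l1 {n a : ℕ} (hA : 3 + a < n) :
    (Finset.univ.filter fun v : Fin n => l1 a v.val).card = a + 1 := by
  have : (Finset.univ.filter fun v : Fin n => l1 a v.val).card
      = ((Finset.range n).filter fun m => l1 a m).card := by
    apply Finset.card_bij (fun v _ => v.val)
    · intro x hx; simp only [Finset.mem_filter, Finset.mem_range, Finset.mem_univ] at hx ⊢
      exact ⟨x.isLt, hx.2⟩
    · intro x _ y _ h; exact Fin.ext h
    · intro m hm; simp only [Finset.mem_filter, Finset.mem_range] at hm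
      exact ⟨⟨m, hm.1⟩, by simp [hm.2], rfl⟩
  rw [this]
  have : (Finset.range n).filter (fun m => l1 a m) = insert 0 (Finset.Ico 4 (4 + a)) := by
    ext m
    rw [Finset.mem_filter]
    simp only [Finset.mem_filter, Finset.mem_range, Finset.mem_insert, Finset.mem_Ico, l1]
    omega
  rw [this, Finset.card_insert_of_notMem (by simp), Nat.card_Ico]
  omega

lemma tnd_card_l2 {n a : ℕ} (hA : 3 + a < n) :
    (Finset.univ.filter fun v : Fin n => l2 a v.val).card = n - 3 - a := by
  have : (Finset.univ.filter fun v : Fin n => l2 a v.val).card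
      = ((Finset.range n).filter fun m => l2 a m).card := by
    apply Finset.card_bij (fun v _ => v.val)
    · intro x hx; simp only [Finset.mem_filter, Finset.mem_range, Finset.mem_univ] at hx ⊢
      exact ⟨x.isLt, hx.2⟩
    · intro x _ y _ h; exact Fin.ext h
    · intro m hm; simp only [Finset.mem_filter, Finset.mem_range] at hm
      exact ⟨⟨m, hm.1⟩, by simp [hm.2], rfl⟩
  rw [this]
  have : (Finset.range n).filter (fun m => l2 a m) = insert 3 (Finset.Ico (4 + a) n) := by
    ext m
    rw [Finset.mem_filter]
    simp only [Finset.mem_filter, Finset.mem_range, Finset.mem_insert, Finset.mem_Ico, l2]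
    omega
  rw [this, Finset.card_insert_of_notMem (by simp; omega), Nat.card_Ico]
  omega

lemma tnd_sum_ind {n : ℕ} (P : Fin n → Prop) [DecidablePred P] (c : ℝ) :
    (∑ v : Fin n, if P v then c else 0) = ((Finset.univ.filter P).card : ℝ) * c := by
  rw [← Finset.sum_filter, Finset.sum_const, nsmul_eq_mul]

lemma tnd_sum_single {n : ℕ} (k : ℕ) (hk : k < n) (f : Fin n → ℝ)
    (hf : ∀ v : Fin n, v.val ≠ k → f v = 0) : (∑ v : Fin n, f v) = f ⟨k, hk⟩ :=
  Finset.sum_eq_single _ (fun b _ hb => hf b (fun h => hb (Fin.ext h))) (by simp)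

lemma tnd_WVeq {n a b : ℕ} (hN : n = a + b + 4) :
    Wm n a * Vm n a =
      !![0, 3, 2*((a:ℝ)+1), 0;
         3, 0, 0, 2*((b:ℝ)+1);
         2, 0, 0, 0;
         0, 2, 0, 0] := by
  have hA : 3 + a < n := by omega
  have h1 : (1:ℕ) < n := by omega
  have h2 : (2:ℕ) < n := by omega
  have e1 : ¬ l1 a 1 := by simp [l1]
  have e2 : ¬ l1 a 2 := by simp [l1]
  have e3 : ¬ l2 a 1 := by simp only [l2]; omega
  have e4 : ¬ l2 a 2 := by simp only [l2]; omega
  ext i j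
  rw [Matrix.mul_apply]
  fin_cases i <;> fin_cases j <;>
      simp only [Wm, Vm, Matrix.cons_val', Matrix.cons_val_zero, Matrix.cons_val_one,
        Matrix.head_cons, Matrix.head_fin_const, Matrix.empty_val', Matrix.cons_val_fin_one,
        Matrix.cons_val_two, Matrix.cons_val_three, Matrix.tail_cons, Matrix.of_apply] <;>
      norm_num [Fin.ext_iff]
  -- (0,0)
  · rw [tnd_sum_single 1 h1 _ (fun v hv => by simp [hv])]
    simp [e1]
  -- (0,1)
  · rw [tnd_sum_single 2 h2 _ (fun v hv => by simp [hv])]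
    simp [e2]
  -- (0,2)
  · trans (∑ v : Fin n, if l1 a v.val then (2:ℝ) else 0)
    · refine Finset.sum_congr rfl fun v _ => ?_
      by_cases hl : l1 a v.val
      · have hv2 : v.val ≠ 2 := by revert hl; simp only [l1]; omega
        simp [hl, hv2]
      · simp [hl]
    · rw [tnd_sum_ind, tnd_card_l1 hA]; push_cast; ring
  -- (0,3)
  · apply Finset.sum_eq_zero
    intro v _
    by_cases hl : l2 a v.val
    · have w1 : ¬ l1 a v.val := by revert hl; simp only [l1, l2]; omega
      have w2 : v.val ≠ 2 := by revert hl; simp only [l2]; omega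
      simp [hl, w1, w2]
    · simp [hl]
  -- (1,0)
  · rw [tnd_sum_single 1 h1 _ (fun v hv => by simp [hv])]
    simp [e3]
  -- (1,1)
  · rw [tnd_sum_single 2 h2 _ (fun v hv => by simp [hv])]
    simp [e4]
  -- (1,2)
  · apply Finset.sum_eq_zero
    intro v _
    by_cases hl : l1 a v.val
    · have w1 : ¬ l2 a v.val := by revert hl; simp only [l1, l2]; omega
      have w2 : v.val ≠ 1 := by revert hl; simp only [l1]; omega
      simp [hl, w1, w2]
    · simp [hl]
  -- (1,3)
  · trans (∑ v : Fin n, if l2 a v.val then (2:ℝ) else 0)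
    · refine Finset.sum_congr rfl fun v _ => ?_
      by_cases hl : l2 a v.val
      · have hv1 : v.val ≠ 1 := by revert hl; simp only [l2]; omega
        simp [hl, hv1]
      · simp [hl]
    · rw [tnd_sum_ind, tnd_card_l2 hA]
      have hc : ((n - 3 - a : ℕ) : ℝ) = (b:ℝ) + 1 := by
        have h' : n - 3 - a = b + 1 := by omega
        rw [h']; push_cast; ring
      rw [hc]; ring
  -- (2,0)
  · rw [tnd_sum_single 1 h1 _ (fun v hv => by simp [hv])]
    simp
  -- (2,1)
  · rw [tnd_sum_single 2 h2 _ (fun v hv => by simp [hv])]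
    simp
  -- (2,2)
  · apply Finset.sum_eq_zero
    intro v _
    by_cases hl : l1 a v.val
    · have w2 : v.val ≠ 1 := by revert hl; simp only [l1]; omega
      simp [hl, w2]
    · simp [hl]
  -- (2,3)
  · apply Finset.sum_eq_zero
    intro v _
    by_cases hl : l2 a v.val
    · have w2 : v.val ≠ 1 := by revert hl; simp only [l2]; omega
      simp [hl, w2]
    · simp [hl]
  -- (3,0)
  · rw [tnd_sum_single 1 h1 _ (fun v hv => by simp [hv])]
    simp
  -- (3,1)
  · rw [tnd_sum_single 2 h2 _ (fun v hv => by simp [hv])]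
    simp
  -- (3,2)
  · apply Finset.sum_eq_zero
    intro v _
    by_cases hl : l1 a v.val
    · have w2 : v.val ≠ 2 := by revert hl; simp only [l1]; omega
      simp [hl, w2]
    · simp [hl]
  -- (3,3)
  · apply Finset.sum_eq_zero
    intro v _
    by_cases hl : l2 a v.val
    · have w2 : v.val ≠ 2 := by revert hl; simp only [l2]; omega
      simp [hl, w2]
    · simp [hl]

open Polynomial in
lemma eval_charpoly' {m : ℕ} (M : Matrix (Fin m) (Fin m) ℝ) (t : ℝ) :
    M.charpoly.eval t = (t • (1 : Matrix (Fin m) (Fin m) ℝ) - M).det := by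
  rw [Matrix.charpoly, ← Polynomial.coe_evalRingHom, RingHom.map_det]
  congr 1
  ext i j
  by_cases h : i = j <;>
    simp [h, Matrix.charmatrix_apply, Matrix.one_apply, Matrix.smul_apply, Matrix.sub_apply]

lemma tnd_det_reduce {n a : ℕ} (hn : 4 ≤ n) (x : ℝ) (hx : x ≠ 0) :
    (x • (1 : Matrix (Fin n) (Fin n) ℝ) - Vm n a * Wm n a).det =
      x ^ (n - 4) * (x • (1 : Matrix (Fin 4) (Fin 4) ℝ) - Wm n a * Vm n a).det := by
  have key : ∀ (m : ℕ) (A : Matrix (Fin m) (Fin 4) ℝ) (B : Matrix (Fin 4) (Fin m) ℝ),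
      x • (1 : Matrix (Fin m) (Fin m) ℝ) - A * B = x • (1 + ((-x⁻¹) • A) * B) := by
    intro m A B
    rw [Matrix.smul_mul, smul_add, smul_smul]
    have : x * -x⁻¹ = -1 := by field_simp
    rw [this, neg_one_smul]
    abel
  have key2 : ∀ (m : ℕ) (A : Matrix (Fin m) (Fin 4) ℝ) (B : Matrix (Fin 4) (Fin m) ℝ),
      x • (1 : Matrix (Fin 4) (Fin 4) ℝ) - B * A = x • (1 + B * ((-x⁻¹) • A)) := by
    intro m A B
    rw [Matrix.mul_smul, smul_add, smul_smul]
    have : x * -x⁻¹ = -1 := by field_simp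
    rw [this, neg_one_smul]
    abel
  rw [key n (Vm n a) (Wm n a), key2 n (Vm n a) (Wm n a)]
  rw [Matrix.det_smul, Matrix.det_smul, Matrix.det_one_add_mul_comm]
  simp only [Fintype.card_fin]
  have hxp : x ^ n = x ^ (n - 4) * x ^ 4 := by
    rw [← pow_add]; congr 1; omega
  rw [hxp]; ring

lemma tnd_det4 {n a b : ℕ} (hN : n = a + b + 4) (x : ℝ) :
    (x • (1 : Matrix (Fin 4) (Fin 4) ℝ) - Wm n a * Vm n a).det =
      x ^ 4 - (4 * (n:ℝ) + 1) * x ^ 2 + 16 * ((a:ℝ) + 1) * ((b:ℝ) + 1) := by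
  rw [tnd_WVeq hN]
  have hnr : (n : ℝ) = (a:ℝ) + (b:ℝ) + 4 := by rw [hN]; push_cast; ring
  have hB : x • (1 : Matrix (Fin 4) (Fin 4) ℝ) -
      !![0, 3, 2*((a:ℝ)+1), 0; 3, 0, 0, 2*((b:ℝ)+1); 2, 0, 0, 0; 0, 2, 0, 0] =
      !![x, -3, -(2*((a:ℝ)+1)), 0; -3, x, 0, -(2*((b:ℝ)+1)); -2, 0, x, 0; 0, -2, 0, x] := by
    ext i j
    fin_cases i <;> fin_cases j <;>
      simp [Matrix.sub_apply, Matrix.smul_apply, Matrix.one_apply, Matrix.vecHead, Matrix.vecTail] <;> norm_num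
  rw [hB]
  simp [Matrix.det_succ_row_zero, Fin.sum_univ_succ, Matrix.det_fin_three, Fin.succAbove]
  rw [hnr]; ring


open Polynomial in
/-- Lemma 2.2: the `𝓔`-spectrum of `(T_{n,3}^{a,b})ᶜ`. -/
theorem stmt_0 {n : ℕ} (hn : 4 ≤ n) (a b : ℕ) (hab : a ≤ b) (hsum : a + b = n - 4) :
    eccEigs ((Tnd n 3 a)ᶜ) =
      ({Real.sqrt ((4 * (n : ℝ) + 1 +
            Real.sqrt ((4 * (n : ℝ) + 1) ^ 2 - 64 * ((a : ℝ) + 1) * ((b : ℝ) + 1))) / 2),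
        -Real.sqrt ((4 * (n : ℝ) + 1 +
            Real.sqrt ((4 * (n : ℝ) + 1) ^ 2 - 64 * ((a : ℝ) + 1) * ((b : ℝ) + 1))) / 2),
        Real.sqrt ((4 * (n : ℝ) + 1 -
            Real.sqrt ((4 * (n : ℝ) + 1) ^ 2 - 64 * ((a : ℝ) + 1) * ((b : ℝ) + 1))) / 2),
        -Real.sqrt ((4 * (n : ℝ) + 1 -
            Real.sqrt ((4 * (n : ℝ) + 1) ^ 2 - 64 * ((a : ℝ) + 1) * ((b : ℝ) + 1))) / 2)} :
          Multiset ℝ) +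
      Multiset.replicate (n - 4) 0 := by
  have hN : n = a + b + 4 := by omega
  set A : ℝ := 4 * (n : ℝ) + 1 with hA
  set D : ℝ := (4 * (n : ℝ) + 1) ^ 2 - 64 * ((a : ℝ) + 1) * ((b : ℝ) + 1) with hD
  set E : ℝ := Real.sqrt D with hE
  set s1 : ℝ := Real.sqrt ((A + E) / 2) with hs1def
  set s2 : ℝ := Real.sqrt ((A - E) / 2) with hs2def
  -- nonnegativity facts
  have hnr : (n : ℝ) = (a:ℝ) + (b:ℝ) + 4 := by rw [hN]; push_cast; ring
  have hD0 : 0 ≤ D := by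
    rw [hD, hnr]
    nlinarith [sq_nonneg ((b:ℝ) - (a:ℝ)), (Nat.cast_nonneg a : (0:ℝ) ≤ a), (Nat.cast_nonneg b : (0:ℝ) ≤ b)]
  have hEsq : E ^ 2 = D := Real.sq_sqrt hD0
  have hE0 : 0 ≤ E := Real.sqrt_nonneg D
  have hEA : E ≤ A := by
    have h1 : D ≤ A ^ 2 := by
      rw [hD, hA]
      nlinarith [(Nat.cast_nonneg a : (0:ℝ) ≤ a), (Nat.cast_nonneg b : (0:ℝ) ≤ b)]
    have h2 : 0 ≤ A := by rw [hA]; positivity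
    nlinarith [hEsq]
  have hr1 : 0 ≤ (A + E) / 2 := by linarith
  have hr2 : 0 ≤ (A - E) / 2 := by linarith
  have hs1 : s1 ^ 2 = (A + E) / 2 := Real.sq_sqrt hr1
  have hs2 : s2 ^ 2 = (A - E) / 2 := Real.sq_sqrt hr2
  -- the characteristic polynomial
  have hcp : (eccMatrix ((Tnd n 3 a)ᶜ)).charpoly =
      (X - C s1) * (X - C (-s1)) * (X - C s2) * (X - C (-s2)) * X ^ (n - 4) := by
    rw [tnd_eccM_eq hn]
    have heval : ∀ x : ℝ, x ≠ 0 →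
        ((Vm n a * Wm n a).charpoly).eval x =
        (((X - C s1) * (X - C (-s1)) * (X - C s2) * (X - C (-s2)) * X ^ (n - 4) : ℝ[X])).eval x := by
      intro x hx
      rw [eval_charpoly', tnd_det_reduce hn x hx, tnd_det4 hN]
      simp only [eval_mul, eval_sub, eval_X, eval_C, eval_pow]
      rw [show (4 * (n:ℝ) + 1) = A from hA.symm, show 16 * ((a:ℝ)+1) * ((b:ℝ)+1) = (A^2 - D)/4 by rw [hD]; ring]
      rw [← hEsq]
      have expand : (x - s1) * (x - -s1) * (x - s2) * (x - -s2) =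
          x^4 - (s1^2 + s2^2) * x^2 + s1^2 * s2^2 := by ring
      rw [expand, hs1, hs2]
      ring
    -- conclude polynomial equality from evaluation on a cofinite set
    by_contra hne
    have hsub : ((Vm n a * Wm n a).charpoly -
        ((X - C s1) * (X - C (-s1)) * (X - C s2) * (X - C (-s2)) * X ^ (n - 4))) ≠ 0 :=
      sub_ne_zero.mpr hne
    have hfin := Polynomial.finite_setOf_isRoot hsub
    have hinf : ({x : ℝ | x ≠ 0}).Infinite := by
      simpa [Set.compl_def] using (Set.finite_singleton (0:ℝ)).infinite_compl
    have hsubset : {x : ℝ | x ≠ 0} ⊆ {x | Polynomial.IsRoot ((Vm n a * Wm n a).charpoly -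
        ((X - C s1) * (X - C (-s1)) * (X - C s2) * (X - C (-s2)) * X ^ (n - 4))) x} := by
      intro x hx
      simp only [Set.mem_setOf_eq] at hx ⊢
      rw [Polynomial.IsRoot, eval_sub, sub_eq_zero]
      exact heval x hx
    exact (hinf.mono hsubset) hfin
  unfold eccEigs
  rw [hcp]
  have m1 : (X - C s1 : ℝ[X]) ≠ 0 := (monic_X_sub_C s1).ne_zero
  have m2 : (X - C (-s1) : ℝ[X]) ≠ 0 := (monic_X_sub_C (-s1)).ne_zero
  have m3 : (X - C s2 : ℝ[X]) ≠ 0 := (monic_X_sub_C s2).ne_zero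
  have m4 : (X - C (-s2) : ℝ[X]) ≠ 0 := (monic_X_sub_C (-s2)).ne_zero
  have m5 : (X ^ (n-4) : ℝ[X]) ≠ 0 := (monic_X_pow (n-4)).ne_zero
  rw [Polynomial.roots_mul (by exact mul_ne_zero (mul_ne_zero (mul_ne_zero (mul_ne_zero m1 m2) m3) m4) m5),
      Polynomial.roots_mul (mul_ne_zero (mul_ne_zero (mul_ne_zero m1 m2) m3) m4),
      Polynomial.roots_mul (mul_ne_zero (mul_ne_zero m1 m2) m3),
      Polynomial.roots_mul (mul_ne_zero m1 m2),
      Polynomial.roots_X_sub_C, Polynomial.roots_X_sub_C, Polynomial.roots_X_sub_C,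
      Polynomial.roots_X_sub_C, Polynomial.roots_pow, Polynomial.roots_X]
  rw [Multiset.nsmul_singleton]
  rfl
end
end

section
/- Let T be a tree on n ≥ 4 vertices that is not a star. Then the eigenvalues of the eccentricity matrix 𝓔(T^c) are symmetric about the origin: if λ is an eigenvalue of 𝓔(T^c) with multiplicity k, then −λ is also an eigenvalue of 𝓔(T^c) with multiplicity k. -/
noncomputable section

open SimpleGraph Polynomial

-- root multiplicity symmetry
lemma aux_rm_le {q : ℝ[X]} (hq : q ≠ 0)
    (hc : q.comp (-X) = q ∨ q.comp (-X) = -q) (a : ℝ) :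
    q.rootMultiplicity a ≤ q.rootMultiplicity (-a) := by
  set k := q.rootMultiplicity a with hk
  have h1 : (X - C a) ^ k ∣ q := q.pow_rootMultiplicity_dvd a
  obtain ⟨r, hr⟩ := h1
  have h2 : ((X - C a) ^ k).comp (-X) ∣ q.comp (-X) :=
    ⟨r.comp (-X), by rw [hr, mul_comp]⟩
  have h3 : ((X - C a) ^ k).comp (-X) = (-1) ^ k * (X - C (-a)) ^ k := by
    rw [pow_comp, sub_comp, X_comp, C_comp]
    have : (-X - C a : ℝ[X]) = -(X - C (-a)) := by rw [map_neg]; ring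
    rw [this, neg_pow]
  rw [h3] at h2
  have h4 : (X - C (-a)) ^ k ∣ q := by
    rcases hc with h | h <;> rw [h] at h2 <;> rcases Nat.even_or_odd k with he | he <;>
      simp only [he.neg_one_pow, one_mul, neg_one_mul, neg_dvd, dvd_neg] at h2 <;> exact h2
  rw [hk]
  exact (Polynomial.le_rootMultiplicity_iff hq).mpr h4

lemma aux_charpoly_comp_neg {N : ℕ} (M : Matrix (Fin N) (Fin N) ℝ) :
    M.charpoly.comp (-X) = (-1) ^ N * (-M).charpoly := by
  let φ : ℝ[X] →+* ℝ[X] := Polynomial.eval₂RingHom Polynomial.C (-X)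
  have hφ : ∀ p : ℝ[X], φ p = p.comp (-X) := fun p => rfl
  have hdet := RingHom.map_det φ (Matrix.charmatrix M)
  have hmap : (Matrix.charmatrix M).map φ = -(Matrix.charmatrix (-M)) := by
    apply Matrix.ext
    intro i j
    by_cases h : i = j
    · subst h
      simp only [Matrix.map_apply, Matrix.charmatrix_apply_eq, Matrix.neg_apply]
      show φ (X - C (M i i)) = -(X - C ((-M) i i))
      simp [φ, Matrix.neg_apply]
      ring
    · simp only [Matrix.map_apply, Matrix.charmatrix_apply_ne _ _ _ h, Matrix.neg_apply]
      show φ (-C (M i j)) = -(-C ((-M) i j))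
      simp [φ, Matrix.neg_apply]
  rw [RingHom.mapMatrix_apply, hmap, Matrix.det_neg] at hdet
  simpa [Matrix.charpoly, hφ, Fintype.card_fin] using hdet

lemma aux_charpoly_neg_eq {N : ℕ} (M : Matrix (Fin N) (Fin N) ℝ) (σ : Fin N → ℝ)
    (hσ : ∀ v, σ v * σ v = 1) (hM : ∀ u v, σ u * M u v * σ v = -M u v) :
    (-M).charpoly = M.charpoly := by
  classical
  set D : Matrix (Fin N) (Fin N) ℝ[X] := Matrix.diagonal (fun i => C (σ i)) with hD
  have key : D * Matrix.charmatrix M * D = Matrix.charmatrix (-M) := by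
    apply Matrix.ext
    intro i j
    have e1 : (D * Matrix.charmatrix M * D) i j
        = C (σ i) * Matrix.charmatrix M i j * C (σ j) := by
      rw [Matrix.mul_diagonal, Matrix.diagonal_mul]
    by_cases h : i = j
    · subst h
      rw [e1, Matrix.charmatrix_apply_eq, Matrix.charmatrix_apply_eq, Matrix.neg_apply]
      have h1 : C (σ i) * (X - C (M i i)) * C (σ i)
          = C (σ i * σ i) * X - C (σ i * M i i * σ i) := by
        simp only [map_mul]; ring
      rw [h1, hσ i, hM i i]
      simp
    · rw [e1, Matrix.charmatrix_apply_ne _ _ _ h, Matrix.charmatrix_apply_ne _ _ _ h,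
        Matrix.neg_apply]
      have h1 : C (σ i) * (-C (M i j)) * C (σ j) = -C (σ i * M i j * σ j) := by
        simp only [map_mul]; ring
      rw [h1, hM i j]
  have hdd : D * D = 1 := by
    rw [hD, Matrix.diagonal_mul_diagonal]
    have : (fun i => C (σ i) * C (σ i)) = fun _ : Fin N => (1 : ℝ[X]) := by
      funext i; rw [← map_mul, hσ i, map_one]
    rw [this, Matrix.diagonal_one]
  have hdet1 : D.det * D.det = 1 := by rw [← Matrix.det_mul, hdd, Matrix.det_one]
  calc (-M).charpoly = (D * Matrix.charmatrix M * D).det := by rw [Matrix.charpoly, key]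
    _ = D.det * (Matrix.charmatrix M).det * D.det := by rw [Matrix.det_mul, Matrix.det_mul]
    _ = (D.det * D.det) * (Matrix.charmatrix M).det := by ring
    _ = M.charpoly := by rw [hdet1, one_mul, Matrix.charpoly]

lemma aux_count_symm {N : ℕ} (M : Matrix (Fin N) (Fin N) ℝ) (σ : Fin N → ℝ)
    (hσ : ∀ v, σ v * σ v = 1) (hM : ∀ u v, σ u * M u v * σ v = -M u v) (a : ℝ) :
    Multiset.count a M.charpoly.roots = Multiset.count (-a) M.charpoly.roots := by
  classical
  have hq : M.charpoly ≠ 0 := (Matrix.charpoly_monic M).ne_zero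
  have hcomp : M.charpoly.comp (-X) = (-1) ^ N * M.charpoly := by
    rw [aux_charpoly_comp_neg, aux_charpoly_neg_eq M σ hσ hM]
  have hc : M.charpoly.comp (-X) = M.charpoly ∨ M.charpoly.comp (-X) = -M.charpoly := by
    rcases Nat.even_or_odd N with he | he
    · left; rw [hcomp, he.neg_one_pow, one_mul]
    · right; rw [hcomp, he.neg_one_pow, neg_one_mul]
  rw [Polynomial.count_roots, Polynomial.count_roots]
  refine le_antisymm (aux_rm_le hq hc a) ?_
  have := aux_rm_le hq hc (-a)
  rwa [neg_neg] at this


-- length of any path equals dist, in a tree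
lemma aux_path_length {V : Type*} [DecidableEq V] {T : SimpleGraph V} (hT : T.IsTree) {x y : V}
    (p : T.Walk x y) (hp : p.IsPath) : p.length = T.dist x y := by
  obtain ⟨q, hq⟩ := hT.isConnected.exists_walk_length_eq_dist x y
  have h1 : T.dist x y ≤ p.length := SimpleGraph.dist_le p
  have h2 : q.bypass = p := by
    obtain ⟨P, hP, hPu⟩ := hT.existsUnique_path x y
    rw [hPu _ q.bypass_isPath, hPu _ hp]
  have h3 : p.length ≤ q.length := h2 ▸ q.length_bypass_le
  omega

lemma aux_adj_path {V : Type*} [DecidableEq V] {T : SimpleGraph V} (hT : T.IsTree) {u v : V}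
    (h : T.Adj u v) (p : T.Walk u v) (hp : p.IsPath) :
    p = SimpleGraph.Walk.cons h SimpleGraph.Walk.nil := by
  obtain ⟨P, hP, hPu⟩ := hT.existsUnique_path u v
  have h2 : (SimpleGraph.Walk.cons h SimpleGraph.Walk.nil).IsPath := by
    rw [SimpleGraph.Walk.cons_isPath_iff]
    exact ⟨SimpleGraph.Walk.IsPath.nil, by simp [h.ne]⟩
  rw [hPu _ hp, hPu _ h2]

lemma aux_no_triangle {V : Type*} [DecidableEq V] {T : SimpleGraph V} (hT : T.IsTree) {u v w : V}
    (huv : T.Adj u v) (hvw : T.Adj v w) (huw : T.Adj u w) : False := by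
  have hp2 : (SimpleGraph.Walk.cons huv (SimpleGraph.Walk.cons hvw SimpleGraph.Walk.nil)).IsPath := by
    rw [SimpleGraph.Walk.cons_isPath_iff, SimpleGraph.Walk.cons_isPath_iff]
    refine ⟨⟨SimpleGraph.Walk.IsPath.nil, by simp [hvw.ne]⟩, ?_⟩
    simp [huv.ne, huw.ne]
  have := aux_adj_path hT huw _ hp2
  have := congrArg SimpleGraph.Walk.length this
  simp at this

lemma aux_no_c4 {V : Type*} [DecidableEq V] {T : SimpleGraph V} (hT : T.IsTree) {u v w x : V}
    (huv : T.Adj u v) (hvw : T.Adj v w) (hux : T.Adj u x) (hxw : T.Adj x w)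
    (hvx : v ≠ x) (huw : u ≠ w) : False := by
  have hp1 : (SimpleGraph.Walk.cons huv (SimpleGraph.Walk.cons hvw SimpleGraph.Walk.nil)).IsPath := by
    rw [SimpleGraph.Walk.cons_isPath_iff, SimpleGraph.Walk.cons_isPath_iff]
    exact ⟨⟨SimpleGraph.Walk.IsPath.nil, by simp [hvw.ne]⟩, by simp [huv.ne, huw]⟩
  have hp2 : (SimpleGraph.Walk.cons hux (SimpleGraph.Walk.cons hxw SimpleGraph.Walk.nil)).IsPath := by
    rw [SimpleGraph.Walk.cons_isPath_iff, SimpleGraph.Walk.cons_isPath_iff]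
    exact ⟨⟨SimpleGraph.Walk.IsPath.nil, by simp [hxw.ne]⟩, by simp [hux.ne, huw]⟩
  obtain ⟨P, hP, hPu⟩ := hT.existsUnique_path u w
  have heq := (hPu _ hp1).trans (hPu _ hp2).symm
  have := congrArg SimpleGraph.Walk.support heq
  simp at this
  exact hvx this

-- dichotomy of distances for adjacent vertices in a tree
lemma aux_dist_adj {V : Type*} [DecidableEq V] {T : SimpleGraph V} (hT : T.IsTree) (r : V) {u v : V}
    (h : T.Adj u v) :
    T.dist r v = T.dist r u + 1 ∨ T.dist r u = T.dist r v + 1 := by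
  obtain ⟨q, hq, _⟩ := hT.existsUnique_path r v
  by_cases hu : u ∈ q.support
  · left
    have ht : (q.takeUntil u hu).IsPath := hq.takeUntil hu
    have hd : (q.dropUntil u hu).IsPath := hq.dropUntil hu
    have hdrop := aux_adj_path hT h _ hd
    have hlen := congrArg SimpleGraph.Walk.length (q.take_spec hu)
    rw [SimpleGraph.Walk.length_append, hdrop] at hlen
    rw [← aux_path_length hT q hq, ← aux_path_length hT _ ht, ← hlen]
    simp
  · right
    have hc : (q.concat h.symm).IsPath := by
      rw [← SimpleGraph.Walk.isPath_reverse_iff, SimpleGraph.Walk.reverse_concat,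
        SimpleGraph.Walk.cons_isPath_iff]
      refine ⟨by rwa [SimpleGraph.Walk.isPath_reverse_iff], ?_⟩
      rw [SimpleGraph.Walk.support_reverse, List.mem_reverse]
      exact hu
    rw [← aux_path_length hT q hq, ← aux_path_length hT _ hc,
      SimpleGraph.Walk.length_concat]

lemma aux_star_iso {n : ℕ} (hn : 4 ≤ n) {T : SimpleGraph (Fin n)} (hT : T.IsTree)
    (c : Fin n) (hall : ∀ x, x ≠ c → T.Adj c x) : Nonempty (T ≃g _root_.starGraph n) := by
  have hn0 : 0 < n := by omega
  set z : Fin n := ⟨0, hn0⟩ with hzdef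
  have hchar : ∀ a b, T.Adj a b ↔ a ≠ b ∧ (a = c ∨ b = c) := by
    intro a b
    constructor
    · intro hab
      refine ⟨hab.ne, ?_⟩
      by_contra hc
      push_neg at hc
      exact aux_no_triangle hT (hall a hc.1) hab (hall b hc.2)
    · rintro ⟨hab, rfl | rfl⟩
      · exact hall b (Ne.symm hab)
      · exact (hall a hab).symm
  have hz : ∀ a : Fin n, (Equiv.swap c z a) = z ↔ a = c := by
    intro a
    rw [Equiv.apply_eq_iff_eq_symm_apply, Equiv.symm_swap, Equiv.swap_apply_right]
  have hval : ∀ x : Fin n, x.val = 0 ↔ x = z := by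
    intro x
    rw [Fin.ext_iff]
  refine ⟨⟨Equiv.swap c z, ?_⟩⟩
  intro a b
  rw [hchar]
  show (_root_.starGraph n).Adj (Equiv.swap c z a) (Equiv.swap c z b) ↔ _
  rw [_root_.starGraph, SimpleGraph.fromRel_adj]
  rw [hval, hval, hz, hz, ne_eq, EmbeddingLike.apply_eq_iff_eq]

lemma aux_reach {n : ℕ} (hn : 4 ≤ n) {T : SimpleGraph (Fin n)} (hT : T.IsTree)
    (hstar : ¬ Nonempty (T ≃g _root_.starGraph n)) {u v : Fin n} (h : T.Adj u v) :
    Tᶜ.Reachable u v := by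
  by_cases hw : ∃ w, w ≠ u ∧ w ≠ v ∧ ¬T.Adj u w ∧ ¬T.Adj v w
  · obtain ⟨w, hwu, hwv, h1, h2⟩ := hw
    have a1 : Tᶜ.Adj u w := (T.compl_adj u w).mpr ⟨Ne.symm hwu, h1⟩
    have a2 : Tᶜ.Adj w v := (T.compl_adj w v).mpr ⟨hwv, fun hh => h2 hh.symm⟩
    exact ⟨SimpleGraph.Walk.cons a1 (SimpleGraph.Walk.cons a2 SimpleGraph.Walk.nil)⟩
  · push_neg at hw
    by_cases hx : ∃ x, x ≠ u ∧ x ≠ v ∧ T.Adj u x ∧ ¬T.Adj v x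
    · by_cases hy : ∃ w, w ≠ u ∧ w ≠ v ∧ T.Adj v w ∧ ¬T.Adj u w
      · obtain ⟨x, hxu, hxv, hux, hnvx⟩ := hx
        obtain ⟨w, hwu, hwv, hvw, hnuw⟩ := hy
        have hxw : x ≠ w := by rintro rfl; exact hnuw hux
        have hnxw : ¬T.Adj x w := fun hadj =>
          aux_no_c4 hT h hvw hux hadj (Ne.symm hxv) (Ne.symm hwu)
        have a1 : Tᶜ.Adj u w := (T.compl_adj u w).mpr ⟨Ne.symm hwu, hnuw⟩
        have a2 : Tᶜ.Adj w x := (T.compl_adj w x).mpr ⟨Ne.symm hxw, fun hh => hnxw hh.symm⟩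
        have a3 : Tᶜ.Adj x v := (T.compl_adj x v).mpr ⟨hxv, fun hh => hnvx hh.symm⟩
        exact ⟨SimpleGraph.Walk.cons a1 (SimpleGraph.Walk.cons a2
          (SimpleGraph.Walk.cons a3 SimpleGraph.Walk.nil))⟩
      · push_neg at hy
        have hall : ∀ x, x ≠ u → T.Adj u x := by
          intro x hxu
          by_cases hxv : x = v
          · subst hxv; exact h
          · by_cases ha : T.Adj u x
            · exact ha
            · exact hy x hxu hxv (hw x hxu hxv ha)
        exact absurd (aux_star_iso hn hT u hall) hstar
    · push_neg at hx
      have hall : ∀ x, x ≠ v → T.Adj v x := by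
        intro x hxv
        by_cases hxu : x = u
        · subst hxu; exact h.symm
        · by_cases hb : T.Adj u x
          · exact hx x hxu hxv hb
          · exact hw x hxu hxv hb
      exact absurd (aux_star_iso hn hT v hall) hstar

lemma aux_ecc_ge {n : ℕ} (hn : 4 ≤ n) {T : SimpleGraph (Fin n)} (hT : T.IsTree)
    (hstar : ¬ Nonempty (T ≃g _root_.starGraph n)) (u : Fin n) : 2 ≤ ecc Tᶜ u := by
  have hnbr : ∃ w, T.Adj u w := by
    haveI : Nontrivial (Fin n) :=
      ⟨⟨⟨0, by omega⟩, ⟨1, by omega⟩, by simp [Fin.ext_iff]⟩⟩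
    obtain ⟨v, hv⟩ := exists_ne u
    obtain ⟨p⟩ := hT.isConnected.preconnected u v
    cases p with
    | nil => exact absurd rfl (Ne.symm hv)
    | cons hadj q => exact ⟨_, hadj⟩
  obtain ⟨w, hw⟩ := hnbr
  have hr : Tᶜ.Reachable u w := aux_reach hn hT hstar hw
  have h1 : 0 < Tᶜ.dist u w := hr.pos_dist_of_ne hw.ne
  have h2 : Tᶜ.dist u w ≠ 1 := by
    intro h1'
    exact ((T.compl_adj u w).mp (SimpleGraph.dist_eq_one_iff_adj.mp h1')).2 hw
  have h3 : Tᶜ.dist u w ≤ ecc Tᶜ u := Finset.le_sup (Finset.mem_univ w)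
  omega

lemma aux_support {n : ℕ} (hn : 4 ≤ n) {T : SimpleGraph (Fin n)} (hT : T.IsTree)
    (hstar : ¬ Nonempty (T ≃g _root_.starGraph n)) {u v : Fin n}
    (hMuv : eccMatrix Tᶜ u v ≠ 0) : T.Adj u v := by
  by_contra hadj
  simp only [eccMatrix] at hMuv
  by_cases hcond : u ≠ v ∧ Tᶜ.dist u v = min (ecc Tᶜ u) (ecc Tᶜ v)
  · obtain ⟨hne, hd⟩ := hcond
    have hc : Tᶜ.Adj u v := (T.compl_adj u v).mpr ⟨hne, hadj⟩
    have h1 : Tᶜ.dist u v = 1 := SimpleGraph.dist_eq_one_iff_adj.mpr hc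
    have e1 := aux_ecc_ge hn hT hstar u
    have e2 := aux_ecc_ge hn hT hstar v
    have := le_min e1 e2
    omega
  · rw [if_neg hcond] at hMuv
    exact hMuv rfl

/-- Theorem 3.6: the eigenvalues of the eccentricity matrix of the complement of
a tree are symmetric about the origin (with multiplicities). -/
theorem stmt_5 {n : ℕ} (hn : 4 ≤ n) (T : SimpleGraph (Fin n)) (hT : T.IsTree)
    (hstar : ¬ Nonempty (T ≃g _root_.starGraph n)) (lam : ℝ) :
    Multiset.count lam (eccEigs Tᶜ) = Multiset.count (-lam) (eccEigs Tᶜ) := by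
  classical
  set r : Fin n := ⟨0, by omega⟩ with hrdef
  set σ : Fin n → ℝ := fun v => (-1 : ℝ) ^ (T.dist r v) with hσdef
  have hσ : ∀ v, σ v * σ v = 1 := by
    intro v
    rw [hσdef]
    dsimp only
    rw [← pow_add]
    exact Even.neg_one_pow ⟨_, rfl⟩
  have hM : ∀ u v, σ u * eccMatrix Tᶜ u v * σ v = -eccMatrix Tᶜ u v := by
    intro u v
    by_cases h0 : eccMatrix Tᶜ u v = 0
    · rw [h0]; simp
    · have hadj : T.Adj u v := aux_support hn hT hstar h0
      have hodd : Odd (T.dist r u + T.dist r v) := by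
        rcases aux_dist_adj hT r hadj with h | h
        · exact ⟨T.dist r u, by omega⟩
        · exact ⟨T.dist r v, by omega⟩
      have hσσ : σ u * σ v = -1 := by
        rw [hσdef]
        dsimp only
        rw [← pow_add]
        exact Odd.neg_one_pow hodd
      calc σ u * eccMatrix Tᶜ u v * σ v = σ u * σ v * eccMatrix Tᶜ u v := by ring
        _ = -eccMatrix Tᶜ u v := by rw [hσσ, neg_one_mul]
  have := aux_count_symm (eccMatrix Tᶜ) σ hσ hM lam
  simpa [eccEigs] using this
end
end

section
/- For n ≥ 5, the 𝓔-energy of the complement of the tree T_{n,4}^{0,n−5} equals 2·sqrt(4(n−1)+8·sqrt(2n−7)). Moreover, the eccentricity matrix of (T_{n,4}^{0,n−5})^c has eigenvalues ±sqrt(2n−2+2·sqrt(n^2−10n+29)) and ±sqrt(2n−2−2·sqrt(n^2−10n+29)), each with multiplicity 1, and 0 with multiplicity n−4. -/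
noncomputable section

open SimpleGraph

namespace S16

open Matrix Polynomial

variable {n : ℕ}

/-- Adjacency predicate (on values) of the tree `T_{n,4}^{0,n-5}`. -/
def adjP (a b : ℕ) : Prop :=
  a ≠ b ∧ ((a + 1 = b ∧ b ≤ 4) ∨ (b + 1 = a ∧ a ≤ 4) ∨ (a = 3 ∧ 4 < b) ∨ (b = 3 ∧ 4 < a))

instance (a b : ℕ) : Decidable (adjP a b) := by unfold adjP; infer_instance

/-- Twice the adjacency matrix of the tree. -/
def M (n : ℕ) : Matrix (Fin n) (Fin n) ℝ :=
  Matrix.of fun u v => if adjP u.val v.val then (2:ℝ) else 0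

lemma tnd_adj (u v : Fin n) : (Tnd n 4 0).Adj u v ↔ adjP u.val v.val := by
  simp only [Tnd, SimpleGraph.fromRel_adj, adjP, ne_eq, Fin.val_fin_le, Fin.ext_iff]
  omega

lemma compl_adj' (u v : Fin n) :
    (Tnd n 4 0)ᶜ.Adj u v ↔ u ≠ v ∧ ¬ adjP u.val v.val := by
  rw [SimpleGraph.compl_adj, tnd_adj]

lemma dist_eq_one (hn : 5 ≤ n) {u v : Fin n} (h : u ≠ v) (h2 : ¬ adjP u.val v.val) :
    (Tnd n 4 0)ᶜ.dist u v = 1 := by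
  rw [SimpleGraph.dist_eq_one_iff_adj, compl_adj']
  exact ⟨h, h2⟩

lemma dist_eq_two (hn : 5 ≤ n) {u v : Fin n} (h : adjP u.val v.val) :
    (Tnd n 4 0)ᶜ.dist u v = 2 := by
  set G := (Tnd n 4 0)ᶜ with hG
  set w : Fin n := if u.val = 3 ∨ v.val = 3 then ⟨0, by omega⟩ else ⟨4, by omega⟩ with hw
  have hcor : (w.val = 0 ∧ (u.val = 3 ∨ v.val = 3)) ∨
      (w.val = 4 ∧ ¬(u.val = 3 ∨ v.val = 3)) := by
    by_cases h3 : u.val = 3 ∨ v.val = 3 <;> simp [hw, h3]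
  have hadj1 : G.Adj u w := by
    rw [compl_adj']
    constructor
    · intro hx; apply_fun Fin.val at hx
      simp only [adjP] at h; omega
    · intro hc; simp only [adjP] at h hc; omega
  have hadj2 : G.Adj w v := by
    rw [compl_adj']
    constructor
    · intro hx; apply_fun Fin.val at hx
      simp only [adjP] at h; omega
    · intro hc; simp only [adjP] at h hc; omega
  have hle : G.dist u v ≤ 2 := by
    have := SimpleGraph.dist_le
      (SimpleGraph.Walk.cons hadj1 (SimpleGraph.Walk.cons hadj2 SimpleGraph.Walk.nil))
    simpa using this
  have hne : u ≠ v := by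
    intro hx; rw [hx] at h; simp only [adjP] at h; omega
  have h0 : G.dist u v ≠ 0 := by
    rw [SimpleGraph.dist_ne_zero_iff_ne_and_reachable]
    exact ⟨hne, ⟨SimpleGraph.Walk.cons hadj1
      (SimpleGraph.Walk.cons hadj2 SimpleGraph.Walk.nil)⟩⟩
  have h1 : G.dist u v ≠ 1 := by
    rw [ne_eq, SimpleGraph.dist_eq_one_iff_adj, compl_adj']
    intro ⟨_, hc⟩; exact hc h
  omega

lemma ecc_eq_two (hn : 5 ≤ n) (v : Fin n) : ecc ((Tnd n 4 0)ᶜ) v = 2 := by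
  have h5 : (0:ℕ) < n := by omega
  apply le_antisymm
  · apply Finset.sup_le
    intro u _
    by_cases he : v = u
    · subst he; simp [SimpleGraph.dist_self]
    · by_cases ha : adjP v.val u.val
      · rw [dist_eq_two hn ha]
      · rw [dist_eq_one hn he ha]; omega
  · set w : Fin n := if v.val = 0 then ⟨1, by omega⟩ else if v.val ≤ 4 then ⟨v.val - 1, by omega⟩
      else ⟨3, by omega⟩ with hw
    have ha : adjP v.val w.val := by
      have : (v.val = 0 ∧ w.val = 1) ∨ (v.val ≠ 0 ∧ v.val ≤ 4 ∧ w.val = v.val - 1) ∨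
          (4 < v.val ∧ w.val = 3) := by
        rw [hw]; split_ifs <;> simp_all
      simp only [adjP]; omega
    calc (2:ℕ) = (Tnd n 4 0)ᶜ.dist v w := (dist_eq_two hn ha).symm
      _ ≤ _ := Finset.le_sup (Finset.mem_univ w)

lemma eccMatrix_eq (hn : 5 ≤ n) : eccMatrix ((Tnd n 4 0)ᶜ) = M n := by
  funext u v
  show _ = if adjP u.val v.val then (2:ℝ) else 0
  simp only [eccMatrix, ecc_eq_two hn, min_self]
  by_cases he : u = v
  · subst he
    have : ¬ adjP u.val u.val := by simp [adjP]
    simp [this]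
  · by_cases ha : adjP u.val v.val
    · rw [dist_eq_two hn ha]; simp [he, ha]
    · rw [dist_eq_one hn he ha]; simp [he, ha]

lemma det_tsM (hn : 5 ≤ n) (t : ℝ) (ht : t ≠ 0) :
    (t • (1 : Matrix (Fin n) (Fin n) ℝ) - M n).det
      = t ^ (n - 4) * (t ^ 4 - (4 * (n:ℝ) - 4) * t ^ 2 + (32 * (n:ℝ) - 112)) := by
  have h4 : 4 + (n - 4) = n := by omega
  set e : Fin 4 ⊕ Fin (n - 4) ≃ Fin n := finSumFinEquiv.trans (finCongr h4) with he
  have hvl : ∀ i : Fin 4, (e (Sum.inl i)).val = i.val := by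
    intro i; simp [he, finCongr_apply]
  have hvr : ∀ j : Fin (n - 4), (e (Sum.inr j)).val = 4 + j.val := by
    intro j; simp [he, finCongr_apply]
  have hent : ∀ p q : Fin n, (t • (1 : Matrix (Fin n) (Fin n) ℝ) - M n) p q
      = (if p.val = q.val then t else 0) - (if adjP p.val q.val then 2 else 0) := by
    intro p q
    simp [M, Matrix.sub_apply, Matrix.smul_apply, Matrix.one_apply, Fin.ext_iff]
  set A : Matrix (Fin 4) (Fin 4) ℝ := !![t,-2,0,0; -2,t,-2,0; 0,-2,t,-2; 0,0,-2,t] with hA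
  set B : Matrix (Fin 4) (Fin (n-4)) ℝ :=
    Matrix.of (fun i _ => if i.val = 3 then (-2:ℝ) else 0) with hB
  set D : Matrix (Fin (n-4)) (Fin (n-4)) ℝ := t • 1 with hD
  have hsub : (t • (1 : Matrix (Fin n) (Fin n) ℝ) - M n).submatrix e e
      = fromBlocks A B Bᵀ D := by
    funext x y
    cases x with
    | inl i =>
      cases y with
      | inl j =>
        simp only [Matrix.submatrix_apply, hent, hvl, fromBlocks_apply₁₁]
        fin_cases i <;> fin_cases j <;> norm_num [adjP, hA]
      | inr j =>
        simp only [Matrix.submatrix_apply, hent, hvl, hvr, fromBlocks_apply₁₂, hB,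
          Matrix.of_apply]
        by_cases h3 : i.val = 3
        · rw [if_neg (by omega : ¬ (i.val = 4 + j.val)),
            if_pos (show adjP i.val (4 + j.val) by simp only [adjP]; omega), if_pos h3]
          norm_num
        · rw [if_neg (by omega : ¬ (i.val = 4 + j.val)),
            if_neg (show ¬ adjP i.val (4 + j.val) by simp only [adjP]; omega), if_neg h3]
          norm_num
    | inr i =>
      cases y with
      | inl j =>
        simp only [Matrix.submatrix_apply, hent, hvl, hvr, fromBlocks_apply₂₁,
          Matrix.transpose_apply, hB, Matrix.of_apply]
        by_cases h3 : j.val = 3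
        · rw [if_neg (by omega : ¬ (4 + i.val = j.val)),
            if_pos (show adjP (4 + i.val) j.val by simp only [adjP]; omega), if_pos h3]
          norm_num
        · rw [if_neg (by omega : ¬ (4 + i.val = j.val)),
            if_neg (show ¬ adjP (4 + i.val) j.val by simp only [adjP]; omega), if_neg h3]
          norm_num
      | inr j =>
        simp only [Matrix.submatrix_apply, hent, hvl, hvr, fromBlocks_apply₂₂, hD,
          Matrix.smul_apply, Matrix.one_apply, smul_eq_mul]
        rw [if_neg (show ¬ adjP (4 + i.val) (4 + j.val) by simp only [adjP]; omega), sub_zero]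
        have hiff : (4 + i.val = 4 + j.val) ↔ i = j := by rw [Fin.ext_iff]; omega
        rw [show (if 4 + i.val = 4 + j.val then t else 0) = if i = j then t else 0 by
          exact if_congr hiff rfl rfl]
        split_ifs <;> simp
  haveI : Invertible D := ⟨t⁻¹ • 1, by
      rw [hD, Matrix.smul_mul, Matrix.mul_smul, one_mul, smul_smul,
        inv_mul_cancel₀ ht, one_smul], by
      rw [hD, Matrix.smul_mul, Matrix.mul_smul, one_mul, smul_smul,
        mul_inv_cancel₀ ht, one_smul]⟩
  have hinv : ⅟D = t⁻¹ • 1 := invOf_eq_right_inv (by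
    rw [hD, Matrix.smul_mul, Matrix.mul_smul, one_mul, smul_smul,
      mul_inv_cancel₀ ht, one_smul])
  have hdet1 : (t • (1 : Matrix (Fin n) (Fin n) ℝ) - M n).det
      = D.det * (A - B * ⅟D * Bᵀ).det := by
    rw [← Matrix.det_submatrix_equiv_self e, hsub, Matrix.det_fromBlocks₂₂]
  have hBB : B * Bᵀ = Matrix.of
      (fun i k => if i.val = 3 ∧ k.val = 3 then 4 * ((n:ℝ) - 4) else 0) := by
    funext i k
    simp only [Matrix.mul_apply, hB, Matrix.transpose_apply, Matrix.of_apply]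
    by_cases hi : i.val = 3 <;> by_cases hk : k.val = 3 <;>
      simp [hi, hk, Finset.sum_const, Fintype.card_fin] <;>
      push_cast [Nat.cast_sub (by omega : 4 ≤ n)] <;> ring
  have hBDC : B * ⅟D * Bᵀ = Matrix.of
      (fun i k => if i.val = 3 ∧ k.val = 3 then 4 * ((n:ℝ) - 4) / t else 0) := by
    rw [hinv, Matrix.mul_smul, Matrix.mul_one, Matrix.smul_mul, hBB]
    funext i k
    by_cases hi : i.val = 3 <;> by_cases hk : k.val = 3 <;>
      simp [hi, hk, Matrix.smul_apply, div_eq_inv_mul]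
  have hN : A - B * ⅟D * Bᵀ =
      !![t,-2,0,0; -2,t,-2,0; 0,-2,t,-2; 0,0,-2, t - 4 * ((n:ℝ) - 4) / t] := by
    rw [hBDC, hA]
    funext i k
    fin_cases i <;> fin_cases k <;> norm_num [Matrix.sub_apply]
  have hdetD : D.det = t ^ (n - 4) := by
    rw [hD, Matrix.det_smul, Matrix.det_one, mul_one, Fintype.card_fin]
  have hdetN : (A - B * ⅟D * Bᵀ).det
      = t ^ 4 - (4 * (n:ℝ) - 4) * t ^ 2 + (32 * (n:ℝ) - 112) := by
    rw [hN]
    have hsa : Fin.succAbove (1:Fin 4) (2:Fin 3) = 3 := by decide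
    simp [Matrix.det_succ_row_zero, Fin.sum_univ_succ, Matrix.det_fin_one, hsa]
    field_simp
    ring
  rw [hdet1, hdetD, hdetN]

lemma eval_charpoly {m : ℕ} (N : Matrix (Fin m) (Fin m) ℝ) (t : ℝ) :
    N.charpoly.eval t = (t • (1 : Matrix (Fin m) (Fin m) ℝ) - N).det := by
  have h := RingHom.map_det (Polynomial.evalRingHom t) (Matrix.charmatrix N)
  rw [Matrix.charpoly]
  rw [show (Matrix.charmatrix N).det.eval t
      = (Polynomial.evalRingHom t) (Matrix.charmatrix N).det from rfl, h]
  congr 1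
  funext i j
  by_cases hij : i = j
  · subst hij
    simp [Matrix.charmatrix_apply_eq, Matrix.smul_apply, Matrix.one_apply]
  · simp [Matrix.charmatrix_apply_ne _ _ _ hij, hij, Matrix.one_apply,
      Matrix.smul_apply]

lemma quad_factor (a b : ℝ) :
    (X^2 - C a) * (X^2 - C b) = X^4 - C (a+b) * X^2 + C (a*b) := by
  rw [C_add, C_mul]; ring

lemma charpoly_M (hn : 5 ≤ n) :
    (M n).charpoly = X ^ (n - 4) *
      ((X^2 - C (2*(n:ℝ) - 2 + 2*Real.sqrt ((n:ℝ)^2 - 10*(n:ℝ) + 29))) *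
       (X^2 - C (2*(n:ℝ) - 2 - 2*Real.sqrt ((n:ℝ)^2 - 10*(n:ℝ) + 29)))) := by
  set s : ℝ := Real.sqrt ((n:ℝ)^2 - 10*(n:ℝ) + 29) with hs
  have hs2 : s^2 = (n:ℝ)^2 - 10*(n:ℝ) + 29 := by
    rw [hs]
    apply Real.sq_sqrt
    nlinarith [sq_nonneg ((n:ℝ) - 5)]
  have hq : (X^2 - C (2*(n:ℝ) - 2 + 2*s)) * (X^2 - C (2*(n:ℝ) - 2 - 2*s))
      = X^4 - C (4*(n:ℝ) - 4) * X^2 + C (32*(n:ℝ) - 112) := by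
    have h1 : (32*(n:ℝ) - 112) = (2*(n:ℝ) - 2 + 2*s) * (2*(n:ℝ) - 2 - 2*s) := by
      nlinarith [hs2]
    have h2 : (4*(n:ℝ) - 4) = (2*(n:ℝ) - 2 + 2*s) + (2*(n:ℝ) - 2 - 2*s) := by ring
    rw [quad_factor, ← h1, ← h2]
  rw [hq]
  have hroot : ∀ t : ℝ, t ≠ 0 → ((M n).charpoly -
      X ^ (n - 4) * (X^4 - C (4*(n:ℝ) - 4) * X^2 + C (32*(n:ℝ) - 112))).IsRoot t := by
    intro t ht
    simp only [Polynomial.IsRoot, Polynomial.eval_sub, Polynomial.eval_mul,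
      Polynomial.eval_pow, Polynomial.eval_add, Polynomial.eval_X, Polynomial.eval_C,
      eval_charpoly, det_tsM hn t ht]
    ring
  have hinf : Set.Infinite {t : ℝ | ((M n).charpoly -
      X ^ (n - 4) * (X^4 - C (4*(n:ℝ) - 4) * X^2 + C (32*(n:ℝ) - 112))).IsRoot t} := by
    apply Set.Infinite.mono (s := {t : ℝ | t ≠ 0})
    · intro t ht; exact hroot t ht
    · have : ({t : ℝ | t ≠ 0}) = ({0} : Set ℝ)ᶜ := by ext t; simp
      rw [this]
      exact (Set.finite_singleton 0).infinite_compl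
  exact sub_eq_zero.mp (Polynomial.eq_zero_of_infinite_isRoot _ hinf)

lemma s_le (hn : 5 ≤ n) : Real.sqrt ((n:ℝ)^2 - 10*(n:ℝ) + 29) ≤ (n:ℝ) - 1 := by
  have h5 : (5:ℝ) ≤ (n:ℝ) := by exact_mod_cast hn
  rw [show (n:ℝ) - 1 = Real.sqrt (((n:ℝ) - 1)^2) by
    rw [Real.sqrt_sq (by linarith)]]
  apply Real.sqrt_le_sqrt
  nlinarith

lemma roots_M (hn : 5 ≤ n) :
    (M n).charpoly.roots =
      ({Real.sqrt (2 * (n : ℝ) - 2 + 2 * Real.sqrt ((n : ℝ) ^ 2 - 10 * (n : ℝ) + 29)),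
        -Real.sqrt (2 * (n : ℝ) - 2 + 2 * Real.sqrt ((n : ℝ) ^ 2 - 10 * (n : ℝ) + 29)),
        Real.sqrt (2 * (n : ℝ) - 2 - 2 * Real.sqrt ((n : ℝ) ^ 2 - 10 * (n : ℝ) + 29)),
        -Real.sqrt (2 * (n : ℝ) - 2 - 2 * Real.sqrt ((n : ℝ) ^ 2 - 10 * (n : ℝ) + 29))} :
        Multiset ℝ) + Multiset.replicate (n - 4) 0 := by
  have h5 : (5:ℝ) ≤ (n:ℝ) := by exact_mod_cast hn
  set s : ℝ := Real.sqrt ((n:ℝ)^2 - 10*(n:ℝ) + 29) with hs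
  have hsnn : 0 ≤ s := Real.sqrt_nonneg _
  set a : ℝ := 2*(n:ℝ) - 2 + 2*s with ha
  set b : ℝ := 2*(n:ℝ) - 2 - 2*s with hb
  have hann : 0 ≤ a := by rw [ha]; linarith
  have hbnn : 0 ≤ b := by rw [hb]; have := s_le hn; rw [← hs] at this; linarith
  have hfa : (X^2 - C a : Polynomial ℝ) = (X - C (Real.sqrt a)) * (X + C (Real.sqrt a)) := by
    have : C a = C (Real.sqrt a) * C (Real.sqrt a) := by
      rw [← C_mul, Real.mul_self_sqrt hann]
    rw [this]; ring
  have hfb : (X^2 - C b : Polynomial ℝ) = (X - C (Real.sqrt b)) * (X + C (Real.sqrt b)) := by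
    have : C b = C (Real.sqrt b) * C (Real.sqrt b) := by
      rw [← C_mul, Real.mul_self_sqrt hbnn]
    rw [this]; ring
  have hfact : (M n).charpoly = X ^ (n - 4) *
      ((X - C (Real.sqrt a)) * (X + C (Real.sqrt a)) *
       ((X - C (Real.sqrt b)) * (X + C (Real.sqrt b)))) := by
    rw [charpoly_M hn, ← hs, ← ha, ← hb, hfa, hfb]
  have hne : (M n).charpoly ≠ 0 := (Matrix.charpoly_monic (M n)).ne_zero
  rw [hfact] at hne ⊢
  have hplus : ∀ r : ℝ, (X + C r : Polynomial ℝ) = X - C (-r) := by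
    intro r; rw [map_neg, sub_neg_eq_add]
  rw [Polynomial.roots_mul hne,
    Polynomial.roots_mul (by intro h; apply hne; rw [mul_eq_zero]; right; exact h),
    Polynomial.roots_mul (by
      intro h; apply hne; rw [mul_eq_zero]; right; rw [mul_eq_zero]; left; exact h),
    Polynomial.roots_mul (by
      intro h; apply hne; rw [mul_eq_zero]; right; rw [mul_eq_zero]; right; exact h),
    Polynomial.roots_pow, Polynomial.roots_X, Multiset.nsmul_singleton,
    Polynomial.roots_X_sub_C, hplus, Polynomial.roots_X_sub_C, hplus,
    Polynomial.roots_X_sub_C, Polynomial.roots_X_sub_C]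
  rw [add_comm]
  congr 1

end S16

/-- Lemma 5.4: the `𝓔`-energy and `𝓔`-spectrum of `(T_{n,4}^{0,n-5})ᶜ`. -/
theorem stmt_16 {n : ℕ} (hn : 5 ≤ n) :
    eccEnergy ((Tnd n 4 0)ᶜ) =
      2 * Real.sqrt (4 * ((n : ℝ) - 1) + 8 * Real.sqrt (2 * (n : ℝ) - 7)) ∧
    eccEigs ((Tnd n 4 0)ᶜ) =
      ({Real.sqrt (2 * (n : ℝ) - 2 +
            2 * Real.sqrt ((n : ℝ) ^ 2 - 10 * (n : ℝ) + 29)),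
        -Real.sqrt (2 * (n : ℝ) - 2 +
            2 * Real.sqrt ((n : ℝ) ^ 2 - 10 * (n : ℝ) + 29)),
        Real.sqrt (2 * (n : ℝ) - 2 -
            2 * Real.sqrt ((n : ℝ) ^ 2 - 10 * (n : ℝ) + 29)),
        -Real.sqrt (2 * (n : ℝ) - 2 -
            2 * Real.sqrt ((n : ℝ) ^ 2 - 10 * (n : ℝ) + 29))} : Multiset ℝ) +
      Multiset.replicate (n - 4) 0 := by
  have heigs : eccEigs ((Tnd n 4 0)ᶜ) =
      ({Real.sqrt (2 * (n : ℝ) - 2 + 2 * Real.sqrt ((n : ℝ) ^ 2 - 10 * (n : ℝ) + 29)),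
        -Real.sqrt (2 * (n : ℝ) - 2 + 2 * Real.sqrt ((n : ℝ) ^ 2 - 10 * (n : ℝ) + 29)),
        Real.sqrt (2 * (n : ℝ) - 2 - 2 * Real.sqrt ((n : ℝ) ^ 2 - 10 * (n : ℝ) + 29)),
        -Real.sqrt (2 * (n : ℝ) - 2 - 2 * Real.sqrt ((n : ℝ) ^ 2 - 10 * (n : ℝ) + 29))} :
        Multiset ℝ) + Multiset.replicate (n - 4) 0 := by
    rw [eccEigs, S16.eccMatrix_eq hn, S16.roots_M hn]
  refine ⟨?_, heigs⟩
  rw [eccEnergy, heigs]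
  have h5 : (5:ℝ) ≤ (n:ℝ) := by exact_mod_cast hn
  set s : ℝ := Real.sqrt ((n:ℝ)^2 - 10*(n:ℝ) + 29) with hs
  have hsnn : 0 ≤ s := Real.sqrt_nonneg _
  have hs2 : s^2 = (n:ℝ)^2 - 10*(n:ℝ) + 29 := by
    rw [hs]; apply Real.sq_sqrt; nlinarith [sq_nonneg ((n:ℝ) - 5)]
  have hsle : s ≤ (n:ℝ) - 1 := by rw [hs]; exact S16.s_le hn
  set a : ℝ := 2*(n:ℝ) - 2 + 2*s with ha
  set b : ℝ := 2*(n:ℝ) - 2 - 2*s with hb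
  have hann : 0 ≤ a := by rw [ha]; linarith
  have hbnn : 0 ≤ b := by rw [hb]; linarith
  have hsum : ((( {Real.sqrt a, -Real.sqrt a, Real.sqrt b, -Real.sqrt b} :
      Multiset ℝ) + Multiset.replicate (n - 4) 0).map fun x => |x|).sum
      = 2 * (Real.sqrt a + Real.sqrt b) := by
    simp only [Multiset.map_add, Multiset.sum_add, Multiset.map_replicate,
      abs_zero, Multiset.sum_replicate, smul_zero, add_zero,
      Multiset.insert_eq_cons, Multiset.map_cons, Multiset.map_singleton,
      Multiset.sum_cons, Multiset.sum_singleton, abs_neg,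
      abs_of_nonneg (Real.sqrt_nonneg a), abs_of_nonneg (Real.sqrt_nonneg b)]
    ring
  rw [hsum]
  congr 1
  have hab : a * b = 16 * (2*(n:ℝ) - 7) := by nlinarith [hs2]
  have hsab : Real.sqrt a * Real.sqrt b = 4 * Real.sqrt (2*(n:ℝ) - 7) := by
    rw [← Real.sqrt_mul hann, hab,
      show (16:ℝ) * (2*(n:ℝ) - 7) = 4^2 * (2*(n:ℝ) - 7) by ring,
      Real.sqrt_mul (by positivity), Real.sqrt_sq (by norm_num)]
  have hsq : (Real.sqrt a + Real.sqrt b)^2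
      = 4 * ((n:ℝ) - 1) + 8 * Real.sqrt (2*(n:ℝ) - 7) := by
    rw [add_sq, Real.sq_sqrt hann, Real.sq_sqrt hbnn, mul_assoc, hsab]
    rw [ha, hb]; ring
  rw [← hsq, Real.sqrt_sq (by positivity)]
end
end
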